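/- Let (Xₙ)_{n≥1} and X be random variables on a probability space with a filtration-like decreasing sequence of σ-algebras (H_n), H = ∩ₙ H_n, such that: (i) each Xₙ and X have the same distribution μ; (ii) given H_n, the variables X and Xₙ are conditionally independent and identically distributed. If for every bounded continuous Λ: S → ℝ, E[(Λ(X) − Λ(Xₙ))²] → 2·Var(Λ(X)) as n → ∞, then for every bounded continuous Λ, E[Λ(X) | H] = E[Λ(X)] almost surely. -/

import Mathlib

open MeasureTheory ProbabilityTheory BoundedContinuousFunction

/-- Key step in part (b) of the equivalence theorem: if `X` and `Xₙ` have the same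
law, are conditionally i.i.d. given `Hₙ` (with `Hₙ ↓ H`), and for every bounded
continuous `Λ`, `E[(Λ(X) - Λ(Xₙ))²] → 2 Var(Λ(X))`, then `E[Λ(X) | H] = E[Λ(X)]`
a.s. for every bounded continuous `Λ`. -/
theorem stmt_12 {Ω : Type*} {F : MeasurableSpace Ω} (P : Measure Ω)
    [IsProbabilityMeasure P]
    {S : Type*} [TopologicalSpace S] [PolishSpace S] [MeasurableSpace S] [BorelSpace S]
    (mH : ℕ → MeasurableSpace Ω) (hH_le : ∀ n, mH n ≤ F) (hH_anti : Antitone mH)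
    (X : Ω → S) (Xn : ℕ → Ω → S)
    (hXmeas : Measurable X) (hXnmeas : ∀ n, Measurable (Xn n))
    -- (i) identical distributions
    (hid : ∀ n, Measure.map (Xn n) P = Measure.map X P)
    -- (ii) given `Hₙ`, `X` and `Xₙ` are conditionally independent ...
    (hci : ∀ n, ∀ f g : S →ᵇ ℝ,
      condExp (mH n) P (fun ω => f (X ω) * g (Xn n ω)) =ᵐ[P]
        fun ω => condExp (mH n) P (fun ω' => f (X ω')) ω *
          condExp (mH n) P (fun ω' => g (X ω')) ω)
    -- ... and conditionally identically distributed
    (hcid : ∀ n, ∀ f : S →ᵇ ℝ,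
      condExp (mH n) P (fun ω => f (Xn n ω)) =ᵐ[P]
        condExp (mH n) P (fun ω => f (X ω)))
    -- the variance convergence hypothesis
    (hvar : ∀ Λ : S →ᵇ ℝ,
      Filter.Tendsto (fun n => ∫ ω, (Λ (X ω) - Λ (Xn n ω))^2 ∂P) Filter.atTop
        (nhds (2 * variance (fun ω => Λ (X ω)) P))) :
    ∀ Λ : S →ᵇ ℝ,
      condExp (⨅ n, mH n) P (fun ω => Λ (X ω)) =ᵐ[P]
        fun _ => ∫ ω, Λ (X ω) ∂P := by
  intro Λ
  -- notation
  set Y : Ω → ℝ := fun ω => Λ (X ω) with hY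
  set c : ℝ := ∫ ω, Y ω ∂P with hc
  set M : ℕ → Ω → ℝ := fun n => condExp (mH n) P Y with hM
  -- basic measurability / integrability facts
  have hYsm : AEStronglyMeasurable Y P :=
    (Λ.continuous.measurable.comp hXmeas).aestronglyMeasurable
  have hYbd : ∀ ω, ‖Y ω‖ ≤ ‖Λ‖ := fun ω => Λ.norm_coe_le_norm (X ω)
  have hYtop : MemLp Y ⊤ P := memLp_top_of_bound hYsm ‖Λ‖ (Filter.Eventually.of_forall hYbd)
  have hYint : Integrable Y P := hYtop.integrable le_top
  have hXnsm : ∀ n, AEStronglyMeasurable (fun ω => Λ (Xn n ω)) P := fun n =>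
    (Λ.continuous.measurable.comp (hXnmeas n)).aestronglyMeasurable
  have hXnint : ∀ n, Integrable (fun ω => Λ (Xn n ω)) P := fun n =>
    (memLp_top_of_bound (hXnsm n) ‖Λ‖
      (Filter.Eventually.of_forall fun ω => Λ.norm_coe_le_norm _)).integrable le_top
  have hY2int : Integrable (fun ω => (Y ω)^2) P := by
    simpa [pow_two] using hYint.bdd_mul (c := ‖Λ‖) hYsm (Filter.Eventually.of_forall hYbd)
  have hXn2int : ∀ n, Integrable (fun ω => (Λ (Xn n ω))^2) P := fun n => by
    simpa [pow_two] using (hXnint n).bdd_mul (c := ‖Λ‖) (hXnsm n)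
      (Filter.Eventually.of_forall fun ω => Λ.norm_coe_le_norm _)
  have hprodint : ∀ n, Integrable (fun ω => Y ω * Λ (Xn n ω)) P := fun n =>
    (hXnint n).bdd_mul (c := ‖Λ‖) hYsm (Filter.Eventually.of_forall hYbd)
  have hMint : ∀ n, Integrable (M n) P := fun n => integrable_condExp
  have hMbd : ∀ n, ∀ᵐ ω ∂P, |M n ω| ≤ (‖Λ‖₊ : ℝ) := fun n =>
    ae_bdd_condExp_of_ae_bdd (Filter.Eventually.of_forall fun ω => by
      simpa [Real.norm_eq_abs] using hYbd ω)
  have hM2int : ∀ n, Integrable (fun ω => (M n ω)^2) P := fun n => by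
    simpa [pow_two] using (hMint n).bdd_mul (c := (‖Λ‖₊ : ℝ)) (hMint n).1
      ((hMbd n).mono fun ω h => by simpa [Real.norm_eq_abs] using h)
  -- E[Λ(Xₙ)²] = E[Λ(X)²]
  have hsq : ∀ n, ∫ ω, (Λ (Xn n ω))^2 ∂P = ∫ ω, (Y ω)^2 ∂P := by
    intro n
    have hs : AEStronglyMeasurable (fun s => (Λ s)^2) (Measure.map X P) :=
      ((Λ.continuous.pow 2).measurable).aestronglyMeasurable
    have h1 : ∫ ω, (Λ (Xn n ω))^2 ∂P = ∫ s, (Λ s)^2 ∂(Measure.map (Xn n) P) := by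
      rw [integral_map (hXnmeas n).aemeasurable (by rwa [hid n])]
    have h2 : ∫ ω, (Y ω)^2 ∂P = ∫ s, (Λ s)^2 ∂(Measure.map X P) := by
      rw [integral_map hXmeas.aemeasurable hs]
    rw [h1, h2, hid n]
  -- E[Λ(X) Λ(Xₙ)] = E[(Mₙ)²]
  have hprodeq : ∀ n, ∫ ω, Y ω * Λ (Xn n ω) ∂P = ∫ ω, (M n ω)^2 ∂P := by
    intro n
    rw [← integral_condExp (hH_le n) (f := fun ω => Y ω * Λ (Xn n ω))]
    refine integral_congr_ae (((hci n Λ Λ).trans ?_))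
    filter_upwards with ω
    simp [pow_two, hM, hY]
  -- the expansion of E[(Λ(X) - Λ(Xₙ))²]
  have hexpand : ∀ n, ∫ ω, (Y ω - Λ (Xn n ω))^2 ∂P
      = 2 * ∫ ω, (Y ω)^2 ∂P - 2 * ∫ ω, (M n ω)^2 ∂P := by
    intro n
    have : ∀ ω, (Y ω - Λ (Xn n ω))^2
        = (Y ω)^2 + (Λ (Xn n ω))^2 - 2 * (Y ω * Λ (Xn n ω)) := by
      intro ω; ring
    simp_rw [this]
    have hA : Integrable (fun ω => (Y ω)^2 + (Λ (Xn n ω))^2) P := hY2int.add (hXn2int n)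
    have hB : Integrable (fun ω => 2 * (Y ω * Λ (Xn n ω))) P := (hprodint n).const_mul 2
    rw [integral_sub hA hB, integral_add hY2int (hXn2int n), integral_const_mul, hsq n,
      hprodeq n]
    ring
  -- variance identity
  have hvardef : variance Y P = ∫ ω, (Y ω)^2 ∂P - c^2 := by
    have := variance_eq_sub (μ := P) (X := Y) (hYtop.mono_exponent le_top)
    simpa [hc, pow_two] using this
  -- hence ∫ Mₙ² → c²
  have hM2lim : Filter.Tendsto (fun n => ∫ ω, (M n ω)^2 ∂P) Filter.atTop (nhds (c^2)) := by
    have h : Filter.Tendsto (fun n => ∫ ω, (Y ω - Λ (Xn n ω))^2 ∂P) Filter.atTop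
        (nhds (2 * variance Y P)) := hvar Λ
    simp_rw [hexpand] at h
    rw [hvardef] at h
    have h2 : Filter.Tendsto
        (fun n => ((2 * ∫ ω, (Y ω)^2 ∂P) -
          (2 * ∫ ω, (Y ω)^2 ∂P - 2 * ∫ ω, (M n ω)^2 ∂P)) / 2) Filter.atTop
        (nhds (((2 * ∫ ω, (Y ω)^2 ∂P) - 2 * (∫ ω, (Y ω)^2 ∂P - c^2)) / 2)) :=
      (Filter.Tendsto.const_sub _ h).div_const 2
    have heq : (fun n => ((2 * ∫ ω, (Y ω)^2 ∂P) -
        (2 * ∫ ω, (Y ω)^2 ∂P - 2 * ∫ ω, (M n ω)^2 ∂P)) / 2)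
        = fun n => ∫ ω, (M n ω)^2 ∂P := by
      funext n; ring
    rw [heq] at h2
    convert h2 using 2
    ring
  -- ∫ Mₙ = c
  have hMmean : ∀ n, ∫ ω, M n ω ∂P = c := fun n => integral_condExp (hH_le n)
  -- ∫ (Mₙ - c)² → 0
  have hMcsub : ∀ n, Integrable (fun ω => (M n ω)^2 - 2 * c * M n ω) P := fun n =>
    (hM2int n).sub ((hMint n).const_mul _)
  have hMc2 : ∀ n, Integrable (fun ω => (M n ω - c)^2) P := by
    intro n
    have : ∀ ω, (M n ω - c)^2 = ((M n ω)^2 - 2 * c * M n ω) + c^2 := fun ω => by ring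
    simp_rw [this]
    exact ((hMcsub n).add (integrable_const _))
  have hMclim : Filter.Tendsto (fun n => ∫ ω, (M n ω - c)^2 ∂P) Filter.atTop (nhds 0) := by
    have heq : ∀ n, ∫ ω, (M n ω - c)^2 ∂P = ∫ ω, (M n ω)^2 ∂P - c^2 := by
      intro n
      have : ∀ ω, (M n ω - c)^2 = ((M n ω)^2 - 2 * c * M n ω) + c^2 := fun ω => by ring
      simp_rw [this]
      have hB : Integrable (fun ω => 2 * c * M n ω) P := (hMint n).const_mul _
      rw [integral_add (hMcsub n) (integrable_const _),
        integral_sub (hM2int n) hB, integral_const_mul, hMmean n, integral_const]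
      simp [measure_univ]
      ring
    simp_rw [heq]
    have := hM2lim.sub (tendsto_const_nhds (x := c^2) (f := Filter.atTop (α := ℕ)))
    simpa using this
  -- pass to the tail σ-algebra
  set mT : MeasurableSpace Ω := ⨅ n, mH n with hmTdef
  have hmT : mT ≤ F := (iInf_le mH 0).trans (hH_le 0)
  set g : Ω → ℝ := condExp mT P Y with hg
  have hgint : Integrable g P := integrable_condExp
  have hgcint : Integrable (fun ω => |g ω - c|) P := (hgint.sub (integrable_const c)).abs
  -- for each n, g - c = E[Mₙ - c | mT] a.e.
  have htower : ∀ n, (fun ω => g ω - c) =ᵐ[P] condExp mT P (fun ω => M n ω - c) := by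
    intro n
    have h1 : condExp mT P (fun ω => M n ω - c)
        =ᵐ[P] fun ω => condExp mT P (M n) ω - condExp mT P (fun _ => c) ω :=
      condExp_sub (hMint n) (integrable_const c) mT
    have h2 : condExp mT P (M n) =ᵐ[P] g :=
      condExp_condExp_of_le (iInf_le mH n) (hH_le n)
    have h3 : condExp mT P (fun _ : Ω => c) = fun _ => c := condExp_const hmT c
    refine (Filter.EventuallyEq.symm ?_)
    filter_upwards [h1, h2] with ω hω1 hω2
    rw [hω1, hω2, h3]
  -- the quantity T = ∫ |g - c|
  set T : ℝ := ∫ ω, |g ω - c| ∂P with hT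
  have hTle : ∀ n, T ≤ ∫ ω, |M n ω - c| ∂P := by
    intro n
    have : T = ∫ ω, |condExp mT P (fun ω' => M n ω' - c) ω| ∂P := by
      refine integral_congr_ae ?_
      filter_upwards [htower n] with ω hω
      rw [hω]
    rw [this]
    exact integral_abs_condExp_le _
  -- |h| ≤ ε + h²/ε  gives  T ≤ ε for every ε > 0
  have hTeps : ∀ ε : ℝ, 0 < ε → T ≤ ε := by
    intro ε hε
    have key : ∀ n, T ≤ ε + (∫ ω, (M n ω - c)^2 ∂P) / ε := by
      intro n
      refine (hTle n).trans ?_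
      have hmono : ∫ ω, |M n ω - c| ∂P ≤ ∫ ω, (ε + (M n ω - c)^2 / ε) ∂P := by
        refine integral_mono ((hMint n).sub (integrable_const c)).abs
          ((integrable_const ε).add ((hMc2 n).div_const ε)) ?_
        intro ω
        show |M n ω - c| ≤ ε + (M n ω - c)^2 / ε
        have hrw : ε + (M n ω - c)^2 / ε = (ε^2 + (M n ω - c)^2) / ε := by
          field_simp
        rw [hrw, le_div_iff₀ hε]
        nlinarith [sq_nonneg (|M n ω - c| - ε), sq_abs (M n ω - c), abs_nonneg (M n ω - c)]
      refine hmono.trans ?_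
      rw [integral_add (integrable_const ε) ((hMc2 n).div_const ε), integral_const,
        integral_div]
      simp [measure_univ]
    have hlim : Filter.Tendsto (fun n => ε + (∫ ω, (M n ω - c)^2 ∂P) / ε) Filter.atTop
        (nhds (ε + 0 / ε)) := tendsto_const_nhds.add (hMclim.div_const ε)
    have := ge_of_tendsto' hlim key
    simpa using this
  have hT0 : T = 0 := by
    have hge : 0 ≤ T := integral_nonneg fun ω => abs_nonneg _
    have hle : T ≤ 0 := le_of_forall_pos_le_add (by
      intro ε hε
      simpa using hTeps ε hε)
    linarith
  have hzero : (fun ω => |g ω - c|) =ᵐ[P] 0 :=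
    (integral_eq_zero_iff_of_nonneg (fun ω => abs_nonneg _) hgcint).mp hT0
  filter_upwards [hzero] with ω hω
  have : |g ω - c| = 0 := hω
  have := abs_eq_zero.mp this
  simpa [hc] using sub_eq_zero.mp this
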